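/- Let V be a strict weak order on a finite candidate set C and A an axis on C. Then every linear extension of V to a strict total order is single-peaked with respect to A if and only if V is single-plateaued with respect to A and every indifference class of V has size at most two. -/

import Mathlib

def VValley {C : Type*} (A V : C → C → Prop) : Prop :=
  ∃ c1 c2 c3 : C, A c1 c2 ∧ A c2 c3 ∧ V c1 c2 ∧ V c3 c2

def UValley {C : Type*} (A V : C → C → Prop) : Prop :=
  ∃ a b c d : C, a ≠ b ∧ a ≠ c ∧ a ≠ d ∧ b ≠ c ∧ b ≠ d ∧ c ≠ d ∧
    A a b ∧ A b d ∧ A a c ∧ A c d ∧ V a b ∧ V d c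

def Extends {C : Type*} (V T : C → C → Prop) : Prop :=
  ∀ x y, V x y → T x y

/-- `V` is a strict partial order: asymmetric and transitive. -/
def IsSPO {C : Type*} (V : C → C → Prop) : Prop :=
  (∀ x y, V x y → ¬ V y x) ∧ (∀ x y z, V x y → V y z → V x z)

/-- `V` is a strict weak order: a strict partial order with transitive incomparability. -/
def IsSWO {C : Type*} (V : C → C → Prop) : Prop :=
  IsSPO V ∧ ∀ x y z, (¬ V x y ∧ ¬ V y x) → (¬ V y z ∧ ¬ V z y) → (¬ V x z ∧ ¬ V z x)

/-- `V` possibly single-peaked w.r.t. axis `A`: it extends to a total order with no v-valley. -/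
def PossSP {C : Type*} (A V : C → C → Prop) : Prop :=
  ∃ T : C → C → Prop, IsStrictTotalOrder C T ∧ Extends V T ∧ ¬ VValley A T

/-- `V` is single-plateaued w.r.t. `A`: the axis splits into consecutive segments
`X`, `Y`, `Z` where `Y` is exactly the set of maximal elements, `V` strictly increases
along `X`, the elements of `Y` are preferred to everything else, and `V` strictly
decreases along `Z`. -/
def SinglePlateaued {C : Type*} (A V : C → C → Prop) : Prop :=
  ∃ X Y Z : Set C,
    (∀ c, c ∈ X ∨ c ∈ Y ∨ c ∈ Z) ∧
    Disjoint X Y ∧ Disjoint Y Z ∧ Disjoint X Z ∧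
    (∀ x ∈ X, ∀ y ∈ Y, A x y) ∧ (∀ y ∈ Y, ∀ z ∈ Z, A y z) ∧ (∀ x ∈ X, ∀ z ∈ Z, A x z) ∧
    Y = {y | ∀ c, ¬ V c y} ∧
    (∀ x ∈ X, ∀ x' ∈ X, A x x' → V x' x) ∧
    (∀ y ∈ Y, ∀ c ∈ X ∪ Z, V y c) ∧
    (∀ z ∈ Z, ∀ z' ∈ Z, A z z' → V z z')

/-- A nonpeak plateau w.r.t. `A`: `a ⊳ b ⊳ c` with (`a ≻ b` and `b ∼ c`) or (`c ≻ b` and `b ∼ a`). -/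
def NonpeakPlateau {C : Type*} (A V : C → C → Prop) : Prop :=
  ∃ a b c : C, A a b ∧ A b c ∧
    ((V a b ∧ ¬ V b c ∧ ¬ V c b) ∨ (V c b ∧ ¬ V b a ∧ ¬ V a b))

section helpers
variable {C : Type*} {V L : C → C → Prop}

lemma swo_trans_tie (hV : IsSWO V) {a b c : C} (h1 : V a b) (h2 : ¬V b c ∧ ¬V c b) : V a c := by
  by_contra h
  have hca : ¬ V c a := fun hca => h2.2 (hV.1.2 _ _ _ hca h1)
  exact (hV.2 a c b ⟨h, hca⟩ ⟨h2.2, h2.1⟩).1 h1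

lemma swo_tie_trans (hV : IsSWO V) {a b c : C} (h1 : ¬V a b ∧ ¬V b a) (h2 : V b c) : V a c := by
  by_contra h
  have hca : ¬ V c a := fun hca => h1.2 (hV.1.2 _ _ _ h2 hca)
  exact (hV.2 b a c ⟨h1.2, h1.1⟩ ⟨h, hca⟩).1 h2

/-- tie-breaking linear extension of a SWO via a strict total order `L`. -/
def extRel (V L : C → C → Prop) (a b : C) : Prop := V a b ∨ (¬V a b ∧ ¬V b a ∧ L a b)

lemma extRel_extends : Extends V (extRel V L) := fun _ _ h => Or.inl h

lemma extRel_sto (hV : IsSWO V) (hL : IsStrictTotalOrder C L) :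
    IsStrictTotalOrder C (extRel V L) := by
  refine { trichotomous := ?_, irrefl := ?_, trans := ?_ }
  · intro a b
    suffices h : extRel V L a b ∨ a = b ∨ extRel V L b a from
      fun h1 h2 => (h.resolve_left h1).resolve_right h2
    by_cases hab : a = b
    · exact Or.inr (Or.inl hab)
    rcases Classical.em (V a b) with h|h
    · exact Or.inl (Or.inl h)
    rcases Classical.em (V b a) with h'|h'
    · exact Or.inr (Or.inr (Or.inl h'))
    rcases trichotomous_of L a b with hl|hl|hl
    · exact Or.inl (Or.inr ⟨h, h', hl⟩)
    · exact Or.inr (Or.inl hl)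
    · exact Or.inr (Or.inr (Or.inr ⟨h', h, hl⟩))
  · intro a h
    rcases h with h | ⟨_, _, h⟩
    · exact hV.1.1 a a h h
    · exact hL.irrefl a h
  · intro a b c h1 h2
    rcases h1 with h1 | ⟨hab, hba, hl1⟩
    · rcases h2 with h2 | ⟨hbc, hcb, _⟩
      · exact Or.inl (hV.1.2 _ _ _ h1 h2)
      · exact Or.inl (swo_trans_tie hV h1 ⟨hbc, hcb⟩)
    · rcases h2 with h2 | ⟨hbc, hcb, hl2⟩
      · exact Or.inl (swo_tie_trans hV ⟨hab, hba⟩ h2)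
      · have := hV.2 a b c ⟨hab, hba⟩ ⟨hbc, hcb⟩
        exact Or.inr ⟨this.1, this.2, hL.trans _ _ _ hl1 hl2⟩

/-- `L` with `m` moved to the bottom. -/
def belowRel (L : C → C → Prop) (m : C) (a b : C) : Prop := a ≠ m ∧ (b = m ∨ L a b)

lemma belowRel_sto (hL : IsStrictTotalOrder C L) (m : C) :
    IsStrictTotalOrder C (belowRel L m) := by
  refine { trichotomous := ?_, irrefl := ?_, trans := ?_ }
  · intro a b
    suffices h : belowRel L m a b ∨ a = b ∨ belowRel L m b a from
      fun h1 h2 => (h.resolve_left h1).resolve_right h2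
    by_cases hab : a = b
    · exact Or.inr (Or.inl hab)
    by_cases ha : a = m
    · exact Or.inr (Or.inr ⟨fun h => hab (ha.trans h.symm), Or.inl ha⟩)
    by_cases hb : b = m
    · exact Or.inl ⟨ha, Or.inl hb⟩
    rcases trichotomous_of L a b with hl|hl|hl
    · exact Or.inl ⟨ha, Or.inr hl⟩
    · exact Or.inr (Or.inl hl)
    · exact Or.inr (Or.inr ⟨hb, Or.inr hl⟩)
  · rintro a ⟨ha, h|h⟩
    exacts [ha h, hL.irrefl a h]
  · rintro a b c ⟨ha, h1⟩ ⟨hb, h2⟩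
    refine ⟨ha, ?_⟩
    rcases h1 with h1|h1
    · exact absurd h1 hb
    rcases h2 with h2|h2
    · exact Or.inl h2
    · exact Or.inr (hL.trans _ _ _ h1 h2)

lemma extRel_below {m a : C} (hne : a ≠ m) (h : ¬ V m a) :
    extRel V (belowRel L m) a m := by
  rcases Classical.em (V a m) with h'|h'
  · exact Or.inl h'
  · exact Or.inr ⟨h', h, hne, Or.inl rfl⟩

end helpers


theorem stmt14 {C : Type*} [Fintype C] (A V : C → C → Prop)
    (hA : IsStrictTotalOrder C A) (hV : IsSWO V) :
    (∀ T : C → C → Prop, IsStrictTotalOrder C T → Extends V T → ¬ VValley A T) ↔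
      (SinglePlateaued A V ∧
        ∀ x y z : C, x ≠ y → x ≠ z → y ≠ z →
          (¬ V x y ∧ ¬ V y x) → (¬ V y z ∧ ¬ V z y) → False) := by
  classical
  have hAasym : ∀ {a b : C}, A a b → ¬ A b a :=
    fun h h' => hA.irrefl _ (hA.trans _ _ _ h h')
  have hAne : ∀ {a b : C}, A a b → a ≠ b := fun h he => hA.irrefl _ (he ▸ h)
  constructor
  · intro hT
    set L := @WellOrderingRel C with hLdef
    have hL : IsStrictTotalOrder C L := inferInstance
    have hsize : ∀ x y z : C, x ≠ y → x ≠ z → y ≠ z →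
        (¬ V x y ∧ ¬ V y x) → (¬ V y z ∧ ¬ V z y) → False := by
      intro x y z hxy hxz hyz t1 t2
      have t3 : ¬ V x z ∧ ¬ V z x := hV.2 x y z t1 t2
      have key : ∀ a m b : C, (¬ V m a) → (¬ V m b) → a ≠ m → b ≠ m →
          A a m → A m b → False := by
        intro a m b h1 h2 hne1 hne2 hA1 hA2
        exact hT (extRel V (belowRel L m)) (extRel_sto hV (belowRel_sto hL m))
          extRel_extends ⟨a, m, b, hA1, hA2, extRel_below hne1 h1, extRel_below hne2 h2⟩
      rcases trichotomous_of A x y with h1|h1|h1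
      · rcases trichotomous_of A y z with h2|h2|h2
        · exact key x y z t1.2 t2.1 hxy hyz.symm h1 h2
        · exact absurd h2 hyz
        · rcases trichotomous_of A x z with h3|h3|h3
          · exact key x z y t3.2 t2.2 hxz hyz h3 h2
          · exact absurd h3 hxz
          · exact key z x y t3.1 t1.1 hxz.symm hxy.symm h3 h1
      · exact absurd h1 hxy
      · rcases trichotomous_of A x z with h2|h2|h2
        · exact key y x z t1.1 t3.1 hxy.symm hxz.symm h1 h2
        · exact absurd h2 hxz
        · rcases trichotomous_of A y z with h3|h3|h3
          · exact key y z x t2.2 t3.2 hyz hxz h3 h2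
          · exact absurd h3 hyz
          · exact key z y x t2.1 t1.2 hyz.symm hxy h3 h1
    refine ⟨?_, hsize⟩
    rcases isEmpty_or_nonempty C with hE|hNE
    · refine ⟨∅, {y | ∀ c, ¬ V c y}, ∅, fun c => isEmptyElim c, by simp, by simp, by simp,
        fun x hx => absurd hx (Set.notMem_empty x), fun y => isEmptyElim y,
        fun x hx => absurd hx (Set.notMem_empty x), rfl,
        fun x hx => absurd hx (Set.notMem_empty x), fun y => isEmptyElim y,
        fun z hz => absurd hz (Set.notMem_empty z)⟩
    · have wfV : WellFounded V := by
        have : IsTrans C V := ⟨fun a b c => hV.1.2 a b c⟩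
        have : IsIrrefl C V := ⟨fun a h => hV.1.1 a a h h⟩
        exact Finite.wellFounded_of_trans_of_irrefl V
      obtain ⟨y0, -, hy0⟩ := wfV.has_min Set.univ Set.univ_nonempty
      have hy0' : ∀ c, ¬ V c y0 := fun c => hy0 c (Set.mem_univ c)
      set Y := {y : C | ∀ c, ¬ V c y} with hYdef
      have hy0Y : y0 ∈ Y := hy0'
      have hbeat : ∀ y ∈ Y, ∀ c, c ∉ Y → V y c := by
        intro y hy c hc
        rw [hYdef, Set.mem_setOf_eq] at hc
        push_neg at hc
        obtain ⟨d, hd⟩ := hc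
        by_contra h
        exact (hy d) (swo_trans_tie hV hd ⟨hy c, h⟩)
      have hT0 := hT (extRel V L) (extRel_sto hV hL) extRel_extends
      have noBetween : ∀ y1 ∈ Y, ∀ y2 ∈ Y, ∀ c, A y1 c → A c y2 → c ∈ Y := by
        intro y1 hy1 y2 hy2 c h1 h2
        by_contra hc
        exact hT0 ⟨y1, c, y2, h1, h2, Or.inl (hbeat y1 hy1 c hc), Or.inl (hbeat y2 hy2 c hc)⟩
      set X := {c : C | c ∉ Y ∧ A c y0} with hXdef
      set Z := {c : C | c ∉ Y ∧ A y0 c} with hZdef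
      have hAxy : ∀ x ∈ X, ∀ y ∈ Y, A x y := by
        intro x hx y hy
        rcases trichotomous_of A x y with h|rfl|h
        · exact h
        · exact absurd hy hx.1
        · exact absurd (noBetween y hy y0 hy0Y x h hx.2) hx.1
      have hAyz : ∀ y ∈ Y, ∀ z ∈ Z, A y z := by
        intro y hy z hz
        rcases trichotomous_of A y z with h|rfl|h
        · exact h
        · exact absurd hy hz.1
        · exact absurd (noBetween y0 hy0Y y hy z hz.2 h) hz.1
      have hcov : ∀ c, c ∈ X ∨ c ∈ Y ∨ c ∈ Z := by
        intro c
        by_cases hc : c ∈ Y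
        · exact Or.inr (Or.inl hc)
        rcases trichotomous_of A c y0 with h|rfl|h
        · exact Or.inl ⟨hc, h⟩
        · exact absurd hy0Y hc
        · exact Or.inr (Or.inr ⟨hc, h⟩)
      have hXinc : ∀ x ∈ X, ∀ x' ∈ X, A x x' → V x' x := by
        intro x hx x' hx' hxx'
        by_contra h
        exact hT (extRel V (belowRel L x')) (extRel_sto hV (belowRel_sto hL x'))
          extRel_extends ⟨x, x', y0, hxx', hAxy x' hx' y0 hy0Y,
            extRel_below (hAne hxx') h, Or.inl (hbeat y0 hy0Y x' hx'.1)⟩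
      have hZdec : ∀ z ∈ Z, ∀ z' ∈ Z, A z z' → V z z' := by
        intro z hz z' hz' hzz'
        by_contra h
        exact hT (extRel V (belowRel L z)) (extRel_sto hV (belowRel_sto hL z))
          extRel_extends ⟨y0, z, z', hAyz y0 hy0Y z hz, hzz',
            Or.inl (hbeat y0 hy0Y z hz.1), extRel_below (hAne hzz').symm h⟩
      refine ⟨X, Y, Z, hcov, ?_, ?_, ?_, hAxy, hAyz, ?_, rfl, hXinc, ?_, hZdec⟩
      · exact Set.disjoint_left.mpr fun {a} ha hb => ha.1 hb
      · exact Set.disjoint_left.mpr fun {a} ha hb => hb.1 ha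
      · exact Set.disjoint_left.mpr fun {a} ha hb => hAasym ha.2 hb.2
      · exact fun x hx z hz => hA.trans _ _ _ hx.2 hz.2
      · rintro y hy c (hc|hc)
        · exact hbeat y hy c hc.1
        · exact hbeat y hy c hc.1
  · rintro ⟨⟨X, Y, Z, hcov, hXY, hYZ, hXZ, hAxy, hAyz, hAxz, hYdef, hXinc, hYtop, hZdec⟩, hsize⟩
    rintro T hTsto hText ⟨c1, c2, c3, h12, h23, t12, t32⟩
    have hTasym : ∀ {a b : C}, T a b → ¬ T b a :=
      fun h h' => hTsto.irrefl _ (hTsto.trans _ _ _ h h')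
    rcases hcov c2 with h2|h2|h2
    · rcases hcov c1 with h1|h1|h1
      · exact hTasym t12 (hText _ _ (hXinc c1 h1 c2 h2 h12))
      · exact hAasym h12 (hAxy c2 h2 c1 h1)
      · exact hAasym h12 (hAxz c2 h2 c1 h1)
    · have h1 : c1 ∈ Y := by
        rcases hcov c1 with h1|h1|h1
        · exact absurd (hText _ _ (hYtop c2 h2 c1 (Or.inl h1))) (hTasym t12)
        · exact h1
        · exact absurd (hText _ _ (hYtop c2 h2 c1 (Or.inr h1))) (hTasym t12)
      have h3 : c3 ∈ Y := by
        rcases hcov c3 with h3|h3|h3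
        · exact absurd (hText _ _ (hYtop c2 h2 c3 (Or.inl h3))) (hTasym t32)
        · exact h3
        · exact absurd (hText _ _ (hYtop c2 h2 c3 (Or.inr h3))) (hTasym t32)
      have hmax : ∀ y ∈ Y, ∀ c, ¬ V c y := by
        intro y hy
        rw [hYdef] at hy
        exact hy
      exact hsize c1 c2 c3 (hAne h12) (hAne (hA.trans _ _ _ h12 h23)) (hAne h23)
        ⟨hmax c2 h2 c1, hmax c1 h1 c2⟩ ⟨hmax c3 h3 c2, hmax c2 h2 c3⟩
    · rcases hcov c3 with h3|h3|h3
      · exact hAasym h23 (hAxz c3 h3 c2 h2)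
      · exact hAasym h23 (hAyz c3 h3 c2 h2)
      · exact hTasym t32 (hText _ _ (hZdec c2 h2 c3 h3 h23))
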